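/- (Classical discrete Hardy inequality, general p) Let 1 < p < ∞. For every sequence a : ℕ → ℝ of non-negative real numbers, ∑_{n=1}^∞ a(n)^p ≥ ((p−1)/p)^p · ∑_{n=1}^∞ ((a(1) + a(2) + ⋯ + a(n))/n)^p. -/

import Mathlib

open Finset

private lemma mul_self_rpow_sub_one {x p : ℝ} (hx : 0 ≤ x) (hp : 1 < p) :
    x * x ^ (p - 1) = x ^ p := by
  rcases eq_or_lt_of_le hx with h | h
  · rw [← h, Real.zero_rpow (by linarith), Real.zero_rpow (by linarith), mul_zero]
  · calc x * x ^ (p - 1) = x ^ (1 : ℝ) * x ^ (p - 1) := by rw [Real.rpow_one]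
      _ = x ^ (1 + (p - 1)) := (Real.rpow_add h 1 (p - 1)).symm
      _ = x ^ p := by ring_nf

/-- Finite discrete Hardy inequality over the reals. -/
private lemma hardy_finite (p : ℝ) (hp : 1 < p) (b : ℕ → ℝ) (hb : ∀ n, 0 ≤ b n) (N : ℕ) :
    ∑ n ∈ range N, ((∑ i ∈ range (n + 1), b i) / (n + 1 : ℝ)) ^ p
      ≤ (p / (p - 1)) ^ p * ∑ n ∈ range N, b n ^ p := by
  set q : ℝ := p / (p - 1) with hq
  have hp0 : (0 : ℝ) < p := by linarith
  have hp1 : (0 : ℝ) < p - 1 := by linarith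
  have hpq : p.HolderConjugate q := Real.HolderConjugate.conjExponent hp
  have hq0 : 0 < q := hpq.symm.pos
  set A : ℕ → ℝ := fun n => (∑ i ∈ range (n + 1), b i) / (n + 1 : ℝ) with hA
  have hA0 : ∀ n, 0 ≤ A n := fun n =>
    div_nonneg (Finset.sum_nonneg fun i _ => hb i) (by positivity)
  have hSA : ∀ n : ℕ, ∑ i ∈ range (n + 1), b i = (n + 1 : ℝ) * A n := by
    intro n
    rw [hA]
    field_simp
  -- the telescoping control function
  set g : ℕ → ℝ := fun k => (k : ℝ) * A (k - 1) ^ p with hg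
  -- key pointwise estimate
  have key : ∀ n : ℕ, A n ^ p - q * (b n * A n ^ (p - 1)) ≤ (g n - g (n + 1)) / (p - 1) := by
    intro n
    have hx : A n * A n ^ (p - 1) = A n ^ p := mul_self_rpow_sub_one (hA0 n) hp
    match n with
    | 0 =>
      have hb0 : b 0 = A 0 := by
        have := hSA 0
        simp only [Nat.cast_zero, zero_add, one_mul] at this
        simpa using this
      have : g 0 = 0 := by simp [hg]
      have hg1 : g (0 + 1) = A 0 ^ p := by simp [hg]
      rw [this, hg1, hb0]
      have e : A 0 ^ p - q * (A 0 * A 0 ^ (p - 1)) = (0 - A 0 ^ p) / (p - 1) := by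
        rw [hx, hq]; field_simp; ring
      exact le_of_eq e
    | Nat.succ m =>
      set n := m + 1
      have hbn : b n = (n + 1 : ℝ) * A n - (n : ℝ) * A m := by
        have h1 := hSA n
        have h2 := hSA m
        have : ∑ i ∈ range (n + 1), b i = (∑ i ∈ range (m + 1), b i) + b n := by
          rw [Finset.sum_range_succ]
        rw [h1, h2] at this
        push_cast at this ⊢
        have hn : (n : ℝ) = (m : ℝ) + 1 := by simp [n]
        linear_combination -this + A m * hn
      have hyoung : A m * A n ^ (p - 1) ≤ A m ^ p / p + A n ^ p / q := by
        have h := Real.young_inequality_of_nonneg (hA0 m)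
          (Real.rpow_nonneg (hA0 n) (p - 1)) hpq
        rwa [← Real.rpow_mul (hA0 n), hpq.sub_one_mul_conj] at h
      have e1 : A n ^ p - q * (b n * A n ^ (p - 1))
          = (1 - q * ((n : ℝ) + 1)) * A n ^ p + (q * (n : ℝ)) * (A m * A n ^ (p - 1)) := by
        rw [hbn]
        linear_combination (-(q * ((n : ℝ) + 1))) * hx
      have e2 : (q * (n : ℝ)) * (A m * A n ^ (p - 1))
          ≤ (q * (n : ℝ)) * (A m ^ p / p + A n ^ p / q) :=
        mul_le_mul_of_nonneg_left hyoung (by positivity)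
      have e3 : (1 - q * ((n : ℝ) + 1)) * A n ^ p + (q * (n : ℝ)) * (A m ^ p / p + A n ^ p / q)
          = (g n - g (n + 1)) / (p - 1) := by
        have hgn : g n = (n : ℝ) * A m ^ p := by
          show ((n : ℕ) : ℝ) * A (n - 1) ^ p = (n : ℝ) * A m ^ p
          norm_num [n]
        have hgn1 : g (n + 1) = ((n : ℝ) + 1) * A n ^ p := by
          show ((n + 1 : ℕ) : ℝ) * A (n + 1 - 1) ^ p = ((n : ℝ) + 1) * A n ^ p
          push_cast
          norm_num
        rw [hgn, hgn1, hq]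
        field_simp
        ring
      linarith [e1, e2, e3]
  -- telescoping
  have tele : ∑ n ∈ range N, (g n - g (n + 1)) = g 0 - g N := by
    induction N with
    | zero => simp
    | succ k ih => rw [Finset.sum_range_succ, ih]; ring
  have sum_key : ∑ n ∈ range N, A n ^ p
      ≤ q * ∑ n ∈ range N, b n * A n ^ (p - 1) := by
    have h1 : ∑ n ∈ range N, (A n ^ p - q * (b n * A n ^ (p - 1)))
        ≤ ∑ n ∈ range N, (g n - g (n + 1)) / (p - 1) :=
      Finset.sum_le_sum fun n _ => key n
    rw [Finset.sum_sub_distrib, ← Finset.sum_div, tele] at h1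
    have hg0 : g 0 = 0 := by simp [hg]
    have hgN : 0 ≤ g N := by
      exact mul_nonneg (Nat.cast_nonneg N) (Real.rpow_nonneg (hA0 _) p)
    have h2 : (g 0 - g N) / (p - 1) ≤ 0 := by
      rw [hg0]
      apply div_nonpos_of_nonpos_of_nonneg <;> linarith
    have h3 : q * ∑ n ∈ range N, b n * A n ^ (p - 1)
        = ∑ n ∈ range N, q * (b n * A n ^ (p - 1)) := Finset.mul_sum _ _ _
    linarith [h1, h2, h3]
  -- Hölder
  have holder : ∑ n ∈ range N, b n * A n ^ (p - 1)
      ≤ (∑ n ∈ range N, b n ^ p) ^ (1 / p) * (∑ n ∈ range N, A n ^ p) ^ (1 / q) := by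
    have h := Real.inner_le_Lp_mul_Lq_of_nonneg (s := range N) hpq
      (fun i _ => hb i) (fun i _ => Real.rpow_nonneg (hA0 i) (p - 1))
    have hrw : ∀ n : ℕ, (A n ^ (p - 1)) ^ q = A n ^ p := by
      intro n
      rw [← Real.rpow_mul (hA0 n), hpq.sub_one_mul_conj]
    calc ∑ n ∈ range N, b n * A n ^ (p - 1)
        ≤ (∑ n ∈ range N, b n ^ p) ^ (1 / p)
            * (∑ n ∈ range N, (A n ^ (p - 1)) ^ q) ^ (1 / q) := h
      _ = (∑ n ∈ range N, b n ^ p) ^ (1 / p) * (∑ n ∈ range N, A n ^ p) ^ (1 / q) := by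
          congr 2
          exact Finset.sum_congr rfl fun n _ => hrw n
  -- conclude
  set X : ℝ := ∑ n ∈ range N, A n ^ p with hX
  set Y : ℝ := ∑ n ∈ range N, b n ^ p with hY
  have hX0 : 0 ≤ X := Finset.sum_nonneg fun n _ => Real.rpow_nonneg (hA0 n) p
  have hY0 : 0 ≤ Y := Finset.sum_nonneg fun n _ => Real.rpow_nonneg (hb n) p
  have hmain : X ≤ q * (Y ^ (1 / p) * X ^ (1 / q)) := by
    calc X ≤ q * ∑ n ∈ range N, b n * A n ^ (p - 1) := sum_key
      _ ≤ q * (Y ^ (1 / p) * X ^ (1 / q)) := by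
          exact mul_le_mul_of_nonneg_left holder hq0.le
  rcases eq_or_lt_of_le hX0 with h | h
  · rw [← h]
    positivity
  · have hXq : 0 < X ^ (1 / q) := Real.rpow_pos_of_pos h _
    have hsplit : X = X ^ (1 / p) * X ^ (1 / q) := by
      rw [← Real.rpow_add h, one_div, one_div, hpq.inv_add_inv_eq_one, Real.rpow_one]
    have h4 : X ^ (1 / p) * X ^ (1 / q) ≤ (q * Y ^ (1 / p)) * X ^ (1 / q) := by
      rw [← hsplit, mul_assoc]; exact hmain
    have h5 : X ^ (1 / p) ≤ q * Y ^ (1 / p) := le_of_mul_le_mul_right h4 hXq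
    have h6 : (X ^ (1 / p)) ^ p ≤ (q * Y ^ (1 / p)) ^ p :=
      Real.rpow_le_rpow (Real.rpow_nonneg hX0 _) h5 hp0.le
    have l1 : (X ^ (1 / p)) ^ p = X := by
      rw [← Real.rpow_mul hX0, one_div, inv_mul_cancel₀ hp0.ne', Real.rpow_one]
    have l2 : (q * Y ^ (1 / p)) ^ p = q ^ p * Y := by
      rw [Real.mul_rpow hq0.le (Real.rpow_nonneg hY0 _), ← Real.rpow_mul hY0,
        one_div, inv_mul_cancel₀ hp0.ne', Real.rpow_one]
    rw [l1, l2] at h6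
    exact h6

/-- **Classical discrete Hardy inequality (general `1 < p < ∞`).** For every sequence of
non-negative reals, `∑_{n=1}^∞ a(n)^p ≥ ((p-1)/p)^p · ∑_{n=1}^∞ ((a(1) + ⋯ + a(n))/n)^p`,
understood in `[0, ∞]`. -/
theorem classical_discrete_hardy (p : ℝ) (hp : 1 < p) (a : ℕ → ℝ) (ha : ∀ n, 0 ≤ a n) :
    ∑' n : ℕ, ENNReal.ofReal (a (n + 1) ^ p)
      ≥ ENNReal.ofReal (((p - 1) / p) ^ p) *
        ∑' n : ℕ, ENNReal.ofReal
          (((∑ i ∈ Finset.range (n + 1), a (i + 1)) / (n + 1 : ℝ)) ^ p) := by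
  have hp0 : (0 : ℝ) < p := by linarith
  have hp1 : (0 : ℝ) < p - 1 := by linarith
  set b : ℕ → ℝ := fun n => a (n + 1) with hbdef
  have hb : ∀ n, 0 ≤ b n := fun n => ha (n + 1)
  set c : ℝ := ((p - 1) / p) ^ p with hc
  have hc0 : 0 ≤ c := Real.rpow_nonneg (by positivity) p
  set A : ℕ → ℝ := fun n => (∑ i ∈ range (n + 1), b i) / (n + 1 : ℝ) with hA
  have hA0 : ∀ n, 0 ≤ A n := fun n =>
    div_nonneg (Finset.sum_nonneg fun i _ => hb i) (by positivity)
  -- finite version multiplied by the constant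
  have fin : ∀ N : ℕ, c * ∑ n ∈ range N, A n ^ p ≤ ∑ n ∈ range N, b n ^ p := by
    intro N
    have h := hardy_finite p hp b hb N
    have hcq : c * (p / (p - 1)) ^ p = 1 := by
      rw [hc, ← Real.mul_rpow (by positivity) (by positivity)]
      rw [div_mul_div_comm]
      rw [mul_comm (p - 1) p]
      rw [div_self (by positivity)]
      exact Real.one_rpow p
    calc c * ∑ n ∈ range N, A n ^ p
        ≤ c * ((p / (p - 1)) ^ p * ∑ n ∈ range N, b n ^ p) :=
          mul_le_mul_of_nonneg_left h hc0
      _ = ∑ n ∈ range N, b n ^ p := by rw [← mul_assoc, hcq, one_mul]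
  rw [ge_iff_le, ENNReal.tsum_eq_iSup_nat, ENNReal.mul_iSup]
  apply iSup_le
  intro N
  have e1 : ∑ n ∈ range N, ENNReal.ofReal (A n ^ p)
      = ENNReal.ofReal (∑ n ∈ range N, A n ^ p) :=
    (ENNReal.ofReal_sum_of_nonneg fun n _ => Real.rpow_nonneg (hA0 n) p).symm
  calc ENNReal.ofReal c * ∑ n ∈ range N, ENNReal.ofReal (A n ^ p)
      = ENNReal.ofReal (c * ∑ n ∈ range N, A n ^ p) := by
        rw [e1, ← ENNReal.ofReal_mul hc0]
    _ ≤ ENNReal.ofReal (∑ n ∈ range N, b n ^ p) :=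
        ENNReal.ofReal_le_ofReal (fin N)
    _ = ∑ n ∈ range N, ENNReal.ofReal (b n ^ p) :=
        ENNReal.ofReal_sum_of_nonneg fun n _ => Real.rpow_nonneg (hb n) p
    _ ≤ ∑' n : ℕ, ENNReal.ofReal (b n ^ p) := ENNReal.sum_le_tsum _
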